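/- Let Λ be a 2-dimensional sublattice of the 2×2 integer matrices, i.e. a ℤ-submodule spanned by two ℤ-linearly independent matrices, and suppose Λ is stable under the pairing S₄(X,Y) = adj(X·Y), meaning adj(X·Y) ∈ Λ for all X, Y ∈ Λ. Then there exist an integer matrix A and an integer r such that r divides trace(A)² − det(A) and Λ is the ℤ-span of A and r·E, where E is the identity matrix. In particular, Λ contains a nonzero scalar matrix. -/

import Mathlib

lemma qE_identity (X : Matrix (Fin 2) (Fin 2) ℤ) :
    (X.trace ^ 2 - X.det) • (1 : Matrix (Fin 2) (Fin 2) ℤ)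
      = (X * X).adjugate + X.trace • X := by
  rw [Matrix.adjugate_fin_two]
  ext i j
  simp only [Matrix.smul_apply, Matrix.add_apply, Matrix.one_apply,
    Matrix.mul_apply, Fin.sum_univ_two, Matrix.trace_fin_two, Matrix.det_fin_two,
    smul_eq_mul]
  fin_cases i <;> fin_cases j <;> simp <;> ring

set_option maxHeartbeats 1000000 in
lemma nonvanish (B C : Matrix (Fin 2) (Fin 2) ℤ) (hind : LinearIndependent ℤ ![B, C]) :
    B.trace ^ 2 - B.det ≠ 0 ∨ C.trace ^ 2 - C.det ≠ 0 ∨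
      (B + C).trace ^ 2 - (B + C).det ≠ 0 := by
  obtain ⟨a, b, c, d, rfl⟩ : ∃ a b c d, B = !![a, b; c, d] :=
    ⟨_, _, _, _, Matrix.eta_fin_two B⟩
  obtain ⟨a', b', c', d', rfl⟩ : ∃ a b c d, C = !![a, b; c, d] :=
    ⟨_, _, _, _, Matrix.eta_fin_two C⟩
  by_contra hcon
  push_neg at hcon
  obtain ⟨h1, h2, h3⟩ := hcon
  rw [Matrix.trace_fin_two, Matrix.det_fin_two] at h1 h2 h3
  simp only [Matrix.add_apply, Matrix.cons_val', Matrix.cons_val_zero, Matrix.cons_val_one,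
    Matrix.head_cons, Matrix.empty_val', Matrix.cons_val_fin_one, Matrix.head_fin_const,
    Matrix.of_apply] at h1 h2 h3
  have hQ1 : (2*a+d)^2 + 3*d^2 + (b+c)^2 - (b-c)^2 = 0 := by linear_combination 4*h1
  have hQ2 : (2*a'+d')^2 + 3*d'^2 + (b'+c')^2 - (b'-c')^2 = 0 := by linear_combination 4*h2
  have hQ3 : (2*a+d)*(2*a'+d') + 3*(d*d') + (b+c)*(b'+c') - (b-c)*(b'-c') = 0 := by
    linear_combination 2*h3 - 2*h1 - 2*h2
  have hsum : 3*((2*a+d)*d' - (2*a'+d')*d)^2 + ((2*a+d)*(b'+c') - (2*a'+d')*(b+c))^2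
      + 3*(d*(b'+c') - d'*(b+c))^2 = 0 := by
    linear_combination ((2*a'+d')^2+3*d'^2+(b'+c')^2) * hQ1 + (b-c)^2 * hQ2
      - ((2*a+d)*(2*a'+d') + 3*(d*d') + (b+c)*(b'+c') + (b-c)*(b'-c')) * hQ3
  have hs1 : (2*a+d)*d' - (2*a'+d')*d = 0 := by
    have h : ((2*a+d)*d' - (2*a'+d')*d)^2 = 0 := by
      linarith only [hsum, sq_nonneg ((2*a+d)*d' - (2*a'+d')*d),
        sq_nonneg ((2*a+d)*(b'+c') - (2*a'+d')*(b+c)), sq_nonneg (d*(b'+c') - d'*(b+c))]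
    exact pow_eq_zero_iff two_ne_zero |>.mp h
  have hs2 : (2*a+d)*(b'+c') - (2*a'+d')*(b+c) = 0 := by
    have h : ((2*a+d)*(b'+c') - (2*a'+d')*(b+c))^2 = 0 := by
      linarith only [hsum, sq_nonneg ((2*a+d)*d' - (2*a'+d')*d),
        sq_nonneg ((2*a+d)*(b'+c') - (2*a'+d')*(b+c)), sq_nonneg (d*(b'+c') - d'*(b+c))]
    exact pow_eq_zero_iff two_ne_zero |>.mp h
  have hs3 : d*(b'+c') - d'*(b+c) = 0 := by
    have h : (d*(b'+c') - d'*(b+c))^2 = 0 := by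
      linarith only [hsum, sq_nonneg ((2*a+d)*d' - (2*a'+d')*d),
        sq_nonneg ((2*a+d)*(b'+c') - (2*a'+d')*(b+c)), sq_nonneg (d*(b'+c') - d'*(b+c))]
    exact pow_eq_zero_iff two_ne_zero |>.mp h
  have hPG : (2*a+d)*(b'-c') - (2*a'+d')*(b-c) = 0 := by
    have hsq : ((2*a+d)*(b'-c') - (2*a'+d')*(b-c))^2 = 0 := by
      linear_combination (3*((2*a+d)*d' - (2*a'+d')*d)) * hs1
        + ((2*a+d)*(b'+c') - (2*a'+d')*(b+c)) * hs2
        - (2*a+d)^2 * hQ2 - (2*a'+d')^2 * hQ1 + 2*(2*a+d)*(2*a'+d') * hQ3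
    exact pow_eq_zero_iff two_ne_zero |>.mp hsq
  have hEG : d*(b'-c') - d'*(b-c) = 0 := by
    have hsq : (d*(b'-c') - d'*(b-c))^2 = 0 := by
      linear_combination ((2*a+d)*d' - (2*a'+d')*d) * hs1
        + (d*(b'+c') - d'*(b+c)) * hs3
        - d^2 * hQ2 - d'^2 * hQ1 + 2*(d*d') * hQ3
    exact pow_eq_zero_iff two_ne_zero |>.mp hsq
  have hFG : (b+c)*(b'-c') - (b'+c')*(b-c) = 0 := by
    have hsq : ((b+c)*(b'-c') - (b'+c')*(b-c))^2 = 0 := by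
      linear_combination ((2*a+d)*(b'+c') - (2*a'+d')*(b+c)) * hs2
        + (3*(d*(b'+c') - d'*(b+c))) * hs3
        - (b+c)^2 * hQ2 - (b'+c')^2 * hQ1 + 2*((b+c)*(b'+c')) * hQ3
    exact pow_eq_zero_iff two_ne_zero |>.mp hsq
  rw [LinearIndependent.pair_iff] at hind
  by_cases hG' : b' - c' = 0
  · have hg2 : (b'-c')^2 = 0 := by rw [hG']; ring
    have hp2 : (2*a'+d')^2 = 0 := by
      linarith only [hQ2, hg2, sq_nonneg (2*a'+d'), sq_nonneg d', sq_nonneg (b'+c')]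
    have he2 : d'^2 = 0 := by
      linarith only [hQ2, hg2, sq_nonneg (2*a'+d'), sq_nonneg d', sq_nonneg (b'+c')]
    have hf2 : (b'+c')^2 = 0 := by
      linarith only [hQ2, hg2, sq_nonneg (2*a'+d'), sq_nonneg d', sq_nonneg (b'+c')]
    have hp := pow_eq_zero_iff (two_ne_zero) |>.mp hp2
    have he := pow_eq_zero_iff (two_ne_zero) |>.mp he2
    have hf := pow_eq_zero_iff (two_ne_zero) |>.mp hf2
    have hC0 : !![a', b'; c', d'] = (0 : Matrix (Fin 2) (Fin 2) ℤ) := by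
      ext i j
      fin_cases i <;> fin_cases j <;> simp <;> omega
    have := hind 0 1 (by rw [hC0]; simp)
    exact one_ne_zero this.2
  · have haa : (b'-c')*a = (b-c)*a' := by linarith only [hPG, hEG]
    have hdd : (b'-c')*d = (b-c)*d' := by linarith only [hEG]
    have hbb : (b'-c')*b = (b-c)*b' := by linarith only [hFG]
    have hcc : (b'-c')*c = (b-c)*c' := by linarith only [hFG]
    have hz : (b'-c') • !![a, b; c, d] + (-(b-c)) • !![a', b'; c', d'] = 0 := by
      ext i j
      fin_cases i <;> fin_cases j <;>
        simp [Matrix.smul_apply] <;>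
        linarith only [haa, hbb, hcc, hdd]
    exact hG' (hind _ _ hz).1

/-- Any 2-dimensional sublattice of `Mat₂(ℤ)` stable under the pairing
`S₄(X,Y) = adj(X·Y)` is the ℤ-span of a matrix `A` and a scalar matrix `r·E`
with `r ∣ (tr A)² − det A`; in particular it contains a nonzero scalar matrix. -/
theorem stmt17 (Λ : Submodule ℤ (Matrix (Fin 2) (Fin 2) ℤ))
    (hlat : ∃ B C : Matrix (Fin 2) (Fin 2) ℤ,
      LinearIndependent ℤ ![B, C] ∧ Λ = Submodule.span ℤ {B, C})
    (hstab : ∀ X ∈ Λ, ∀ Y ∈ Λ, (X * Y).adjugate ∈ Λ) :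
    (∃ (A : Matrix (Fin 2) (Fin 2) ℤ) (r : ℤ), r ∣ A.trace ^ 2 - A.det ∧
      Λ = Submodule.span ℤ {A, r • (1 : Matrix (Fin 2) (Fin 2) ℤ)}) ∧
    (∃ t : ℤ, t ≠ 0 ∧ t • (1 : Matrix (Fin 2) (Fin 2) ℤ) ∈ Λ) := by
  obtain ⟨B, C, hind, hspan⟩ := hlat
  have hB : B ∈ Λ := by
    rw [hspan]; exact Submodule.subset_span (Set.mem_insert _ _)
  have hC : C ∈ Λ := by
    rw [hspan]; exact Submodule.subset_span (Set.mem_insert_of_mem _ rfl)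
  have key : ∀ X ∈ Λ, (X.trace ^ 2 - X.det) • (1 : Matrix (Fin 2) (Fin 2) ℤ) ∈ Λ := by
    intro X hX
    rw [qE_identity X]
    exact Λ.add_mem (hstab X hX X hX) (Λ.smul_mem _ hX)
  obtain ⟨t, htne, htΛ⟩ : ∃ t : ℤ, t ≠ 0 ∧ t • (1 : Matrix (Fin 2) (Fin 2) ℤ) ∈ Λ := by
    rcases nonvanish B C hind with h | h | h
    · exact ⟨_, h, key B hB⟩
    · exact ⟨_, h, key C hC⟩
    · exact ⟨_, h, key _ (Λ.add_mem hB hC)⟩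
  refine ⟨?_, t, htne, htΛ⟩
  -- the ideal of scalars appearing in Λ
  set f : ℤ →ₗ[ℤ] Matrix (Fin 2) (Fin 2) ℤ :=
    LinearMap.toSpanSingleton ℤ (Matrix (Fin 2) (Fin 2) ℤ) 1 with hf
  set S : Ideal ℤ := Λ.comap f with hSdef
  obtain ⟨r, hrgen⟩ := (IsPrincipalIdealRing.principal S).principal
  have hmem : ∀ s : ℤ, (s • (1 : Matrix (Fin 2) (Fin 2) ℤ) ∈ Λ ↔ r ∣ s) := by
    intro s
    have h1 : s • (1 : Matrix (Fin 2) (Fin 2) ℤ) ∈ Λ ↔ s ∈ S := by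
      rw [hSdef, Submodule.mem_comap, hf, LinearMap.toSpanSingleton_apply]
    rw [h1, hrgen]
    exact Ideal.mem_span_singleton
  have hrne : r ≠ 0 := by
    intro h0
    obtain hdvd := (hmem t).mp htΛ
    rw [h0] at hdvd
    exact htne (zero_dvd_iff.mp hdvd)
  have hr1 : r • (1 : Matrix (Fin 2) (Fin 2) ℤ) ∈ Λ := (hmem r).mpr dvd_rfl
  -- coordinates of r•1 in the basis B, C
  have hr1' : r • (1 : Matrix (Fin 2) (Fin 2) ℤ) ∈ Submodule.span ℤ {B, C} := hspan ▸ hr1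
  rw [Submodule.mem_span_pair] at hr1'
  obtain ⟨x, y, hxy⟩ := hr1'
  -- gcd of coordinates is 1
  obtain ⟨x', hx'⟩ : (↑(Int.gcd x y) : ℤ) ∣ x := Int.gcd_dvd_left x y
  obtain ⟨y', hy'⟩ : (↑(Int.gcd x y) : ℤ) ∣ y := Int.gcd_dvd_right x y
  set g : ℤ := (↑(Int.gcd x y) : ℤ) with hg
  have hgne : g ≠ 0 := by
    intro h0
    have hx0 : x = 0 := by rw [hx', h0]; ring
    have hy0 : y = 0 := by rw [hy', h0]; ring
    rw [hx0, hy0] at hxy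
    simp only [zero_smul, add_zero] at hxy
    have : r • (1 : Matrix (Fin 2) (Fin 2) ℤ) = 0 := hxy.symm
    rcases smul_eq_zero.mp this with h | h
    · exact hrne h
    · exact one_ne_zero h
  set w : Matrix (Fin 2) (Fin 2) ℤ := x' • B + y' • C with hw
  have hwΛ : w ∈ Λ := Λ.add_mem (Λ.smul_mem _ hB) (Λ.smul_mem _ hC)
  have hgw : g • w = r • (1 : Matrix (Fin 2) (Fin 2) ℤ) := by
    rw [hw, smul_add, smul_smul, smul_smul, ← hx', ← hy', hxy]
  have hent : ∀ i j, g * w i j = r * (1 : Matrix (Fin 2) (Fin 2) ℤ) i j := by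
    intro i j
    have := congrFun (congrFun hgw i) j
    simpa [Matrix.smul_apply] using this
  have hw01 : w 0 1 = 0 := by
    have h := hent 0 1
    simp [Matrix.one_apply] at h
    rcases h with h | h
    · exact absurd h hgne
    · exact h
  have hw10 : w 1 0 = 0 := by
    have h := hent 1 0
    simp [Matrix.one_apply] at h
    rcases h with h | h
    · exact absurd h hgne
    · exact h
  have hw00 : g * w 0 0 = r := by simpa [Matrix.one_apply] using hent 0 0
  have hw11 : g * w 1 1 = r := by simpa [Matrix.one_apply] using hent 1 1
  have hwdiag : w 1 1 = w 0 0 := by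
    have : g * w 1 1 = g * w 0 0 := by rw [hw00, hw11]
    exact mul_left_cancel₀ hgne this
  have hwscal : w = (w 0 0) • (1 : Matrix (Fin 2) (Fin 2) ℤ) := by
    ext i j
    fin_cases i <;> fin_cases j <;>
      simp [Matrix.smul_apply, Matrix.one_apply, hw01, hw10, hwdiag]
  have hrdvd : r ∣ w 0 0 := (hmem (w 0 0)).mp (hwscal ▸ hwΛ)
  obtain ⟨k, hk⟩ := hrdvd
  have hgk : g * k = 1 := by
    have : r * (g * k - 1) = 0 := by rw [hk] at hw00; linear_combination hw00
    rcases mul_eq_zero.mp this with h | h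
    · exact absurd h hrne
    · linarith only [h]
  have hgone : Int.gcd x y = 1 := by
    have : g = 1 := Int.eq_one_of_mul_eq_one_right (by rw [hg]; exact Int.natCast_nonneg _) hgk
    exact_mod_cast hg ▸ this
  obtain ⟨u, v, huv⟩ : IsCoprime x y := Int.isCoprime_iff_gcd_eq_one.mpr hgone
  -- the complementary basis vector
  set A : Matrix (Fin 2) (Fin 2) ℤ := (-v) • B + u • C with hA
  have hAΛ : A ∈ Λ := Λ.add_mem (Λ.smul_mem _ hB) (Λ.smul_mem _ hC)
  have hBmem : (-y) • A + u • (r • (1 : Matrix (Fin 2) (Fin 2) ℤ)) = B := by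
    rw [hA, ← hxy]
    match_scalars <;> first | ring1 | linear_combination huv
  have hCmem : x • A + v • (r • (1 : Matrix (Fin 2) (Fin 2) ℤ)) = C := by
    rw [hA, ← hxy]
    match_scalars <;> first | ring1 | linear_combination huv
  refine ⟨A, r, (hmem _).mp (key A hAΛ), le_antisymm ?_ ?_⟩
  · rw [hspan]
    apply Submodule.span_le.mpr
    rintro Z hZ
    simp only [Set.mem_insert_iff, Set.mem_singleton_iff] at hZ
    rcases hZ with rfl | rfl
    · exact Submodule.mem_span_pair.mpr ⟨-y, u, hBmem⟩
    · exact Submodule.mem_span_pair.mpr ⟨x, v, hCmem⟩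
  · apply Submodule.span_le.mpr
    rintro Z hZ
    simp only [Set.mem_insert_iff, Set.mem_singleton_iff] at hZ
    rcases hZ with rfl | rfl
    · exact hAΛ
    · exact hr1
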